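/- Let H be an Eulerian subgraph of an Eulerian multigraph G. If the minimum cycle number of H is strictly less than its maximum cycle number, i.e., c(H) < ν(H), then also c(G) < ν(G). -/

import Mathlib

open scoped Classical

/-- A finite multigraph without loops: a vertex type, an edge type, and an
incidence map assigning to each edge an unordered pair of distinct vertices. -/
structure MGraph where
  V : Type
  E : Type
  finV : Finite V
  finE : Finite E
  ends : E → Sym2 V
  noLoop : ∀ e, ¬ (ends e).IsDiag

namespace MGraph

variable (G : MGraph)

/-- Degree of a vertex counting only edges in the edge set `F`. -/
noncomputable def degOn (F : Set G.E) (v : G.V) : ℕ := {e | e ∈ F ∧ v ∈ G.ends e}.ncard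

/-- Degree of a vertex. -/
noncomputable def deg (v : G.V) : ℕ := G.degOn Set.univ v

/-- Adjacency using only edges from `F`. -/
def AdjOn (F : Set G.E) (a b : G.V) : Prop := ∃ e ∈ F, G.ends e = s(a, b)

/-- Reachability using only edges from `F`. -/
def ReachOn (F : Set G.E) : G.V → G.V → Prop := Relation.ReflTransGen (G.AdjOn F)

/-- Connectivity of a multigraph. -/
def Connected : Prop := Nonempty G.V ∧ ∀ a b : G.V, G.ReachOn Set.univ a b

/-- A set of edges forms a cycle: it is nonempty, every vertex has degree 0 or 2
in it, and any two of its endpoints are joined by a path inside it. -/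
def IsCycle (C : Set G.E) : Prop :=
  C.Nonempty ∧ (∀ v, G.degOn C v = 0 ∨ G.degOn C v = 2) ∧
    ∀ e ∈ C, ∀ f ∈ C, ∀ a b : G.V, a ∈ G.ends e → b ∈ G.ends f → G.ReachOn C a b

/-- A cycle decomposition of the edge set `F`: a set of cycles inside `F` such
that every edge of `F` lies in exactly one of them. -/
def IsCycleDecompOn (F : Set G.E) (D : Set (Set G.E)) : Prop :=
  (∀ C ∈ D, G.IsCycle C ∧ C ⊆ F) ∧ ∀ e ∈ F, ∃! C, C ∈ D ∧ e ∈ C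

/-- A cycle decomposition of the graph. -/
def IsCycleDecomp (D : Set (Set G.E)) : Prop := G.IsCycleDecompOn Set.univ D

/-- Minimum number of cycles in a cycle decomposition of `F`. -/
noncomputable def cOn (F : Set G.E) : ℕ :=
  sInf {n | ∃ D, G.IsCycleDecompOn F D ∧ D.ncard = n}

/-- Maximum number of cycles in a cycle decomposition of `F`. -/
noncomputable def nuOn (F : Set G.E) : ℕ :=
  sSup {n | ∃ D, G.IsCycleDecompOn F D ∧ D.ncard = n}

/-- Minimum cycle number. -/
noncomputable def c : ℕ := G.cOn Set.univ

/-- Maximum cycle number. -/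
noncomputable def nu : ℕ := G.nuOn Set.univ

/-- A multigraph is Eulerian if it admits a closed walk traversing every edge
exactly once. -/
def IsEulerian : Prop :=
  ∃ (vs : List G.V) (es : List G.E),
    vs.length = es.length + 1 ∧
    (∀ (i : ℕ) (e : G.E) (a b : G.V), es[i]? = some e → vs[i]? = some a →
      vs[i + 1]? = some b → G.ends e = s(a, b)) ∧
    vs.head? = vs.getLast? ∧ es.Nodup ∧ ∀ e : G.E, e ∈ es

/-- A cut-edge (bridge): its endpoints are disconnected after its removal. -/
def IsBridge (e : G.E) : Prop :=
  ∃ a b, G.ends e = s(a, b) ∧ ¬ G.ReachOn {e}ᶜ a b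

/-- 2-edge-connectivity: connected and without cut-edges. -/
def TwoEdgeConnected : Prop := G.Connected ∧ ∀ e, ¬ G.IsBridge e

/-- Reachability avoiding a vertex. -/
def ReachAvoid (v : G.V) (a b : G.V) : Prop :=
  Relation.ReflTransGen (fun x y => x ≠ v ∧ y ≠ v ∧ G.AdjOn Set.univ x y) a b

/-- A cut-vertex: two vertices in the same component get separated by its removal. -/
def IsCutVertex (v : G.V) : Prop :=
  ∃ a b, a ≠ v ∧ b ≠ v ∧ G.ReachOn Set.univ a b ∧ ¬ G.ReachAvoid v a b

/-- Biconnected: connected, at least two vertices, and without cut-vertices. -/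
def Biconnected : Prop :=
  G.Connected ∧ 2 ≤ Nat.card G.V ∧ ∀ v, ¬ G.IsCutVertex v

/-- The vertices covered by a set of edges. -/
def VertexSetOf (C : Set G.E) : Set G.V := {v | ∃ e ∈ C, v ∈ G.ends e}

/-- No two edge-disjoint cycles share more than two vertices. -/
def NoTwoCyclesShareThree : Prop :=
  ∀ C1 C2 : Set G.E, G.IsCycle C1 → G.IsCycle C2 → Disjoint C1 C2 →
    (G.VertexSetOf C1 ∩ G.VertexSetOf C2).ncard ≤ 2

/-- An Eulerian multiedge: two vertices joined by an even positive number of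
parallel edges. -/
def IsEulerianMultiedge : Prop :=
  Nat.card G.V = 2 ∧ 0 < Nat.card G.E ∧ Even (Nat.card G.E)

end MGraph

/-- Isomorphism of multigraphs. -/
structure MIso (G H : MGraph) where
  vEquiv : G.V ≃ H.V
  eEquiv : G.E ≃ H.E
  ends_eq : ∀ e, H.ends (eEquiv e) = (G.ends e).map vEquiv

namespace MGraph

/-- Vertex-identification: glue `u1 ∈ V(G1)` with `u2 ∈ V(G2)`. -/
noncomputable def vertexIdent (G1 G2 : MGraph) (u1 : G1.V) (u2 : G2.V) : MGraph where
  V := G1.V ⊕ {v : G2.V // v ≠ u2}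
  E := G1.E ⊕ G2.E
  finV := by have := G1.finV; have := G2.finV; infer_instance
  finE := by have := G1.finE; have := G2.finE; infer_instance
  ends := fun e =>
    match e with
    | Sum.inl e => (G1.ends e).map Sum.inl
    | Sum.inr e => (G2.ends e).map
        (fun v => if h : v = u2 then Sum.inl u1 else Sum.inr ⟨v, h⟩)
  noLoop := by
    rintro (e | e) h
    · exact G1.noLoop e ((Sym2.isDiag_map Sum.inl_injective).mp h)
    · refine G2.noLoop e ((Sym2.isDiag_map ?_).mp h)
      intro a b hab
      by_cases ha : a = u2 <;> by_cases hb : b = u2 <;>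
        simp [ha, hb] at hab ⊢ <;> simp_all

/-- Edge-identification: delete `e1` and `e2` (with endpoints `u1, v1` resp.
`u2, v2`) and add the new edges `u1u2` and `v1v2`. -/
def edgeIdent (G1 G2 : MGraph) (e1 : G1.E) (e2 : G2.E)
    (u1 v1 : G1.V) (u2 v2 : G2.V) : MGraph where
  V := G1.V ⊕ G2.V
  E := {e : G1.E // e ≠ e1} ⊕ {e : G2.E // e ≠ e2} ⊕ Bool
  finV := by have := G1.finV; have := G2.finV; infer_instance
  finE := by have := G1.finE; have := G2.finE; infer_instance
  ends := fun e =>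
    match e with
    | Sum.inl e => (G1.ends e.1).map Sum.inl
    | Sum.inr (Sum.inl e) => (G2.ends e.1).map Sum.inr
    | Sum.inr (Sum.inr true) => s(Sum.inl u1, Sum.inr u2)
    | Sum.inr (Sum.inr false) => s(Sum.inl v1, Sum.inr v2)
  noLoop := by
    rintro (e | e | b) h
    · exact G1.noLoop e.1 ((Sym2.isDiag_map Sum.inl_injective).mp h)
    · exact G2.noLoop e.1 ((Sym2.isDiag_map Sum.inr_injective).mp h)
    · cases b <;> simp [Sym2.mk_isDiag_iff] at h

/-- Vertex-edge-identification: identify `v1` with `v2`, delete `e1 = u1v1`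
and `e2 = u2v2`, and add a new edge `u1u2`. -/
noncomputable def vertexEdgeIdent (G1 G2 : MGraph) (e1 : G1.E) (e2 : G2.E)
    (u1 v1 : G1.V) (u2 v2 : G2.V) (h2 : G2.ends e2 = s(u2, v2)) : MGraph where
  V := G1.V ⊕ {w : G2.V // w ≠ v2}
  E := {e : G1.E // e ≠ e1} ⊕ {e : G2.E // e ≠ e2} ⊕ Unit
  finV := by have := G1.finV; have := G2.finV; infer_instance
  finE := by have := G1.finE; have := G2.finE; infer_instance
  ends := fun e =>
    match e with
    | Sum.inl e => (G1.ends e.1).map Sum.inl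
    | Sum.inr (Sum.inl e) => (G2.ends e.1).map
        (fun w => if h : w = v2 then Sum.inl v1 else Sum.inr ⟨w, h⟩)
    | Sum.inr (Sum.inr _) =>
        s(Sum.inl u1, Sum.inr ⟨u2, fun h =>
          G2.noLoop e2 (by rw [h2, h]; exact Sym2.mk_isDiag_iff.mpr rfl)⟩)
  noLoop := by
    rintro (e | e | u) h
    · exact G1.noLoop e.1 ((Sym2.isDiag_map Sum.inl_injective).mp h)
    · refine G2.noLoop e.1 ((Sym2.isDiag_map ?_).mp h)
      intro a b hab
      by_cases ha : a = v2 <;> by_cases hb : b = v2 <;>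
        simp [ha, hb] at hab ⊢ <;> simp_all
    · simp [Sym2.mk_isDiag_iff] at h

/-- Delete an edge from a multigraph. -/
def deleteEdge (G : MGraph) (e : G.E) : MGraph where
  V := G.V
  E := {f : G.E // f ≠ e}
  finV := G.finV
  finE := by have := G.finE; infer_instance
  ends := fun f => G.ends f.1
  noLoop := fun f => G.noLoop f.1

/-- `Sym2.pmap`-style map into a subtype. -/
noncomputable def sym2Pmap {α β : Type} {p : α → Prop} (f : ∀ a, p a → β)
    (s : Sym2 α) (h : ∀ a ∈ s, p a) : Sym2 β :=
  let z := Classical.choose (Quot.exists_rep s)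
  s(f z.1 (h z.1 (by
      have hz : Quot.mk _ z = s := Classical.choose_spec (Quot.exists_rep s)
      rw [← hz]; exact Sym2.mem_mk_left z.1 z.2)),
    f z.2 (h z.2 (by
      have hz : Quot.mk _ z = s := Classical.choose_spec (Quot.exists_rep s)
      rw [← hz]; exact Sym2.mem_mk_right z.1 z.2)))

/-- Delete a vertex (and all incident edges) from a multigraph. -/
noncomputable def deleteVertex (G : MGraph) (v : G.V) : MGraph where
  V := {w : G.V // w ≠ v}
  E := {e : G.E // v ∉ G.ends e}
  finV := by have := G.finV; infer_instance
  finE := by have := G.finE; infer_instance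
  ends := fun e => sym2Pmap (fun a ha => (⟨a, ha⟩ : {w : G.V // w ≠ v}))
    (G.ends e.1) (fun a ha hav => e.2 (hav ▸ ha))
  noLoop := by
    rintro ⟨e, he⟩ h
    apply G.noLoop e
    unfold sym2Pmap at h
    have hz : Quot.mk _ (Classical.choose (Quot.exists_rep (G.ends e))) = G.ends e :=
      Classical.choose_spec (Quot.exists_rep (G.ends e))
    rw [Sym2.mk_isDiag_iff] at h
    have : (Classical.choose (Quot.exists_rep (G.ends e))).1 =
        (Classical.choose (Quot.exists_rep (G.ends e))).2 := congrArg Subtype.val h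
    rw [← hz]
    exact Sym2.mk_isDiag_iff.mpr this

end MGraph

/-- A tree decomposition of a multigraph: a tree of bags covering all vertices
and edges such that the bags containing a given vertex form a subtree. -/
structure TreeDecomp (G : MGraph) where
  ι : Type
  t : SimpleGraph ι
  isTree : t.IsTree
  bag : ι → Set G.V
  covers_vertex : ∀ v : G.V, ∃ i, v ∈ bag i
  covers_edge : ∀ e : G.E, ∃ i, ∀ v ∈ G.ends e, v ∈ bag i
  bags_connected : ∀ v : G.V, (SimpleGraph.induce {i | v ∈ bag i} t).Connected

namespace MGraph

/-- The graph has treewidth at most `k`. -/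
def twLE (G : MGraph) (k : ℕ) : Prop :=
  ∃ T : TreeDecomp G, ∀ i, (T.bag i).ncard ≤ k + 1

/-- Treewidth of a multigraph. -/
noncomputable def treewidth (G : MGraph) : ℕ := sInf {k | G.twLE k}

/-- The closed necklace on `n ≥ 2` vertices: a cycle of length `n` with all
of its edges doubled. -/
def necklace (n : ℕ) (hn : 2 ≤ n) : MGraph where
  V := ZMod n
  E := ZMod n × Bool
  finV := by have : NeZero n := ⟨by omega⟩; infer_instance
  finE := by have : NeZero n := ⟨by omega⟩; infer_instance
  ends := fun e => s(e.1, e.1 + 1)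
  noLoop := by
    have : Fact (1 < n) := ⟨hn⟩
    intro e h
    rw [Sym2.mk_isDiag_iff] at h
    exact one_ne_zero (left_eq_add.mp h)

end MGraph

namespace MGraph
variable {G : MGraph}


lemma adjOn_symm {F : Set G.E} {a b : G.V} (h : G.AdjOn F a b) : G.AdjOn F b a := by
  obtain ⟨e, he, hab⟩ := h
  exact ⟨e, he, by rw [hab, Sym2.eq_swap]⟩

lemma reachOn_symm {F : Set G.E} {a b : G.V} (h : G.ReachOn F a b) : G.ReachOn F b a :=
  (@Relation.ReflTransGen.stdSymm _ _ ⟨fun _ _ => adjOn_symm⟩).symm _ _ h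

lemma reachOn_trans {F : Set G.E} {a b c : G.V} (h : G.ReachOn F a b)
    (h' : G.ReachOn F b c) : G.ReachOn F a c := Relation.ReflTransGen.trans h h'

lemma mem_ends_reach {C : Set G.E} {f : G.E} (hf : f ∈ C) {x y : G.V}
    (hx : x ∈ G.ends f) (hy : y ∈ G.ends f) : G.ReachOn C x y := by
  obtain ⟨x', hx'⟩ := Sym2.mem_iff_exists.mp hx
  have hadj : G.AdjOn C x x' := ⟨f, hf, hx'⟩
  rw [hx', Sym2.mem_iff] at hy
  rcases hy with rfl | rfl
  · exact Relation.ReflTransGen.refl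
  · exact Relation.ReflTransGen.single hadj


/-- From a nonempty set with all degrees 0 or 2, extract a cycle inside it. -/
lemma exists_cycle_of_deg02 {C : Set G.E} (hne : C.Nonempty)
    (hdeg : ∀ v, G.degOn C v = 0 ∨ G.degOn C v = 2) :
    ∃ C' ⊆ C, G.IsCycle C' := by
  haveI := G.finE
  obtain ⟨e, he⟩ := hne
  obtain ⟨a, b, hab⟩ : ∃ a b, G.ends e = s(a, b) := by
    induction (G.ends e) using Sym2.inductionOn with
    | hf u v => exact ⟨u, v, rfl⟩
  have ha : a ∈ G.ends e := by rw [hab]; exact Sym2.mem_mk_left a b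
  set C' : Set G.E := {f ∈ C | ∃ x ∈ G.ends f, G.ReachOn C x a} with hC'
  have hsub : C' ⊆ C := fun f hf => hf.1
  -- every vertex reachable to a in C is reachable in C'
  have hkey : ∀ x : G.V, G.ReachOn C a x → G.ReachOn C' a x := by
    intro x hx
    induction hx with
    | refl => exact Relation.ReflTransGen.refl
    | tail h1 h2 ih =>
      obtain ⟨g, hg, hends⟩ := h2
      rename_i y z
      have hyg : y ∈ G.ends g := by rw [hends]; exact Sym2.mem_mk_left _ _
      have hgC' : g ∈ C' := ⟨hg, y, hyg, reachOn_symm h1⟩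
      exact Relation.ReflTransGen.tail ih ⟨g, hgC', hends⟩
  have hmemC' : ∀ {f : G.E}, f ∈ C' → ∀ {x : G.V}, x ∈ G.ends f → G.ReachOn C x a := by
    intro f hf x hx
    obtain ⟨hfC, y, hy, hya⟩ := hf
    exact reachOn_trans (mem_ends_reach hfC hx hy) hya
  have hdegeq : ∀ v : G.V, G.ReachOn C v a → G.degOn C' v = G.degOn C v := by
    intro v hv
    unfold degOn
    congr 1
    ext f
    simp only [Set.mem_setOf_eq]
    constructor
    · rintro ⟨hf, hvf⟩; exact ⟨hf.1, hvf⟩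
    · rintro ⟨hf, hvf⟩; exact ⟨⟨hf, v, hvf, hv⟩, hvf⟩
  have hdeg0 : ∀ v : G.V, ¬ G.ReachOn C v a → G.degOn C' v = 0 := by
    intro v hv
    unfold degOn
    rw [Set.ncard_eq_zero (Set.toFinite _)]
    ext f
    simp only [Set.mem_setOf_eq, Set.mem_empty_iff_false, iff_false]
    rintro ⟨hf, hvf⟩
    exact hv (hmemC' hf hvf)
  refine ⟨C', hsub, ⟨e, ⟨he, a, ha, Relation.ReflTransGen.refl⟩⟩, ?_, ?_⟩
  · intro v
    by_cases hv : G.ReachOn C v a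
    · rw [hdegeq v hv]; exact hdeg v
    · exact Or.inl (hdeg0 v hv)
  · intro f hf g hg x y hx hy
    have hxa : G.ReachOn C x a := hmemC' hf hx
    have hya : G.ReachOn C y a := hmemC' hg hy
    exact reachOn_trans (reachOn_symm (hkey x (reachOn_symm hxa))) (hkey y (reachOn_symm hya))


def HasPath (G : MGraph) (F : Set G.E) (n : ℕ) : Prop :=
  ∃ (v : ℕ → G.V) (ed : ℕ → G.E),
    Set.InjOn v (Set.Iic n) ∧ ∀ i < n, ed i ∈ F ∧ G.ends (ed i) = s(v i, v (i+1))

lemma extend_path {F : Set G.E} (hF : ∀ v, Even (G.degOn F v))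
    (hno : ¬ ∃ C ⊆ F, C.Nonempty ∧ ∀ v, G.degOn C v = 0 ∨ G.degOn C v = 2)
    {n : ℕ} (hn : 1 ≤ n) (hp : G.HasPath F n) : G.HasPath F (n + 1) := by
  haveI := G.finE
  obtain ⟨m, rfl⟩ : ∃ m, n = m + 1 := ⟨n - 1, by omega⟩
  obtain ⟨v, ed, hvinj, hed⟩ := hp
  set n := m + 1 with hnn
  -- last edge
  have hlast := hed m (by omega)
  -- injectivity of ed on Iio n
  have hedinj : Set.InjOn ed (Set.Iio n) := by
    intro i hi i' hi' heq
    simp only [Set.mem_Iio] at hi hi'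
    have h1 := (hed i hi).2
    have h2 := (hed i' hi').2
    rw [heq, h2, Sym2.eq_iff] at h1
    rcases h1 with ⟨ha, hb⟩ | ⟨ha, hb⟩
    · exact hvinj (by simp [Set.mem_Iic]; omega) (by simp [Set.mem_Iic]; omega) ha.symm
    · have hii : i' = i + 1 := hvinj (by simp [Set.mem_Iic]; omega) (by simp [Set.mem_Iic]; omega) ha
      have hii' : i' + 1 = i := hvinj (by simp [Set.mem_Iic]; omega) (by simp [Set.mem_Iic]; omega) hb
      omega
  -- find a second edge at v n
  have hmemS : ed m ∈ {e | e ∈ F ∧ v n ∈ G.ends e} :=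
    ⟨hlast.1, by rw [hlast.2]; exact Sym2.mem_mk_right _ _⟩
  have hcard : 1 < G.degOn F (v n) := by
    have h1 : 0 < G.degOn F (v n) := by
      unfold degOn
      exact (Set.ncard_pos (Set.toFinite _)).mpr ⟨ed m, hmemS⟩
    rcases (hF (v n)) with ⟨k, hk⟩
    omega
  obtain ⟨a, b, haS, hbS, hab⟩ := (Set.one_lt_ncard_iff (Set.toFinite _)).mp hcard
  obtain ⟨f, hfS, hfne⟩ : ∃ f, f ∈ {e | e ∈ F ∧ v n ∈ G.ends e} ∧ f ≠ ed m := by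
    by_cases ha : a = ed m
    · exact ⟨b, hbS, by rw [← ha]; exact fun h => hab h.symm⟩
    · exact ⟨a, haS, ha⟩
  obtain ⟨w, hw⟩ := Sym2.mem_iff_exists.mp hfS.2
  have hwv : w ≠ v n := fun h => G.noLoop f (by rw [hw, h]; exact Sym2.mk_isDiag_iff.mpr rfl)
  -- f is not any path edge
  have hfnew : ∀ i < n, f ≠ ed i := by
    intro i hi heq
    have h2 := (hed i hi).2
    rw [← heq, hw, Sym2.eq_iff] at h2
    rcases h2 with ⟨ha, _⟩ | ⟨ha, _⟩
    · have : n = i := hvinj (by simp) (by simp [Set.mem_Iic]; omega) ha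
      omega
    · have : n = i + 1 := hvinj (by simp) (by simp [Set.mem_Iic]; omega) ha
      have : i = m := by omega
      exact hfne (by rw [heq, this])
  by_cases hrep : ∃ j ≤ n, w = v j
  · -- closed: build cycle, contradict hno
    exfalso
    obtain ⟨j, hj, hwj⟩ := hrep
    have hjn : j < n := lt_of_le_of_ne hj (fun h => hwv (by rw [hwj, h]))
    set C : Set G.E := {f} ∪ ed '' (Set.Ico j n) with hC
    apply hno
    refine ⟨C, ?_, ⟨f, Or.inl rfl⟩, ?_⟩
    · rintro g (rfl | ⟨i, hi, rfl⟩)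
      · exact hfS.1
      · exact (hed i hi.2).1
    · intro u
      -- membership characterisations
      have humem : ∀ g ∈ C, u ∈ G.ends g → ∃ i, j ≤ i ∧ i ≤ n ∧ u = v i := by
        rintro g (rfl | ⟨i, ⟨hij, hin⟩, rfl⟩) hu
        · rw [hw, hwj, Sym2.mem_iff] at hu
          rcases hu with rfl | rfl
          · exact ⟨n, hj, le_rfl, rfl⟩
          · exact ⟨j, le_rfl, hj, rfl⟩
        · rw [(hed i hin).2, Sym2.mem_iff] at hu
          rcases hu with rfl | rfl
          · exact ⟨i, hij, by omega, rfl⟩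
          · exact ⟨i + 1, by omega, by omega, rfl⟩
      by_cases hex : ∃ i, j ≤ i ∧ i ≤ n ∧ u = v i
      · right
        obtain ⟨i, hji, hin, rfl⟩ := hex
        have hvne : ∀ k k', k ≤ n → k' ≤ n → k ≠ k' → v k ≠ v k' := by
          intro k k' hk hk' hne heq
          exact hne (hvinj (by simp [Set.mem_Iic, hk]) (by simp [Set.mem_Iic, hk']) heq)
        -- the incidence set
        have hincl : ∀ i' , j ≤ i' → i' < n → v i ∈ G.ends (ed i') → i = i' ∨ i = i' + 1 := by
          intro i' _ hi'n hmem
          rw [(hed i' hi'n).2, Sym2.mem_iff] at hmem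
          rcases hmem with h | h
          · exact Or.inl (hvinj (by simp [Set.mem_Iic, hin]) (by simp [Set.mem_Iic]; omega) h)
          · exact Or.inr (hvinj (by simp [Set.mem_Iic, hin]) (by simp [Set.mem_Iic]; omega) h)
        have hfmem : v i ∈ G.ends f ↔ (i = n ∨ i = j) := by
          rw [hw, hwj, Sym2.mem_iff]
          constructor
          · rintro (h | h)
            · exact Or.inl (hvinj (by simp [Set.mem_Iic, hin]) (by simp) h)
            · exact Or.inr (hvinj (by simp [Set.mem_Iic, hin]) (by simp [Set.mem_Iic]; omega) h)
          · rintro (rfl | rfl)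
            · exact Or.inl rfl
            · exact Or.inr rfl
        have hedmem : ∀ i', i' < n → (v i ∈ G.ends (ed i') ↔ (i = i' ∨ i = i' + 1)) := by
          intro i' hi'n
          rw [(hed i' hi'n).2, Sym2.mem_iff]
          constructor
          · rintro (h | h)
            · exact Or.inl (hvinj (by simp [Set.mem_Iic, hin]) (by simp [Set.mem_Iic]; omega) h)
            · exact Or.inr (hvinj (by simp [Set.mem_Iic, hin]) (by simp [Set.mem_Iic]; omega) h)
          · rintro (rfl | rfl)
            · exact Or.inl rfl
            · exact Or.inr rfl
        have hset : {g | g ∈ C ∧ v i ∈ G.ends g} =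
            (if i = n ∨ i = j then {f} else ∅) ∪
            ed '' {i' | j ≤ i' ∧ i' < n ∧ (i = i' ∨ i = i' + 1)} := by
          ext g
          simp only [Set.mem_setOf_eq, Set.mem_union, Set.mem_image]
          constructor
          · rintro ⟨(rfl | ⟨i', hi', rfl⟩), hu⟩
            · left
              rw [if_pos (hfmem.mp hu)]
              rfl
            · right
              exact ⟨i', ⟨hi'.1, hi'.2, (hedmem i' hi'.2).mp hu⟩, rfl⟩
          · rintro (hg | ⟨i', ⟨h1, h2, h3⟩, rfl⟩)
            · by_cases hc : i = n ∨ i = j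
              · rw [if_pos hc] at hg
                cases hg
                exact ⟨Or.inl rfl, hfmem.mpr hc⟩
              · rw [if_neg hc] at hg; exact absurd hg (Set.notMem_empty g)
            · exact ⟨Or.inr ⟨i', ⟨h1, h2⟩, rfl⟩, (hedmem i' h2).mpr h3⟩
        unfold degOn
        rw [hset]
        -- now case on position of i
        rcases Nat.lt_or_ge i n with hiltn | hige
        · -- i < n
          rcases Nat.eq_or_lt_of_le hji with hj' | hjlt
          · -- i = j : set is {f} ∪ ed '' {j}
            have h1 : (if i = n ∨ i = j then ({f} : Set G.E) else ∅) = {f} := by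
              rw [if_pos (Or.inr hj'.symm)]
            have h2 : {i' | j ≤ i' ∧ i' < n ∧ (i = i' ∨ i = i' + 1)} = {i} := by
              ext i'; simp only [Set.mem_setOf_eq, Set.mem_singleton_iff]; omega
            rw [h1, h2, Set.image_singleton, Set.ncard_union_eq, Set.ncard_singleton,
              Set.ncard_singleton]
            simp only [Set.disjoint_singleton]
            exact hfnew i hiltn
          · -- j < i < n : set is ∅ ∪ ed '' {i-1, i}
            obtain ⟨i0, rfl⟩ : ∃ i0, i = i0 + 1 := ⟨i - 1, by omega⟩
            have h1 : (if i0 + 1 = n ∨ i0 + 1 = j then ({f} : Set G.E) else ∅) = ∅ := by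
              rw [if_neg (by omega)]
            have h2 : {i' | j ≤ i' ∧ i' < n ∧ (i0 + 1 = i' ∨ i0 + 1 = i' + 1)} =
                {i0, i0 + 1} := by
              ext i'; simp only [Set.mem_setOf_eq, Set.mem_insert_iff, Set.mem_singleton_iff]
              omega
            rw [h1, Set.empty_union, h2, Set.image_pair, Set.ncard_pair]
            intro heq
            have := hedinj (by simp [Set.mem_Iio]; omega) (by simp [Set.mem_Iio]; omega) heq
            omega
        · -- i = n : set is {f} ∪ ed '' {m}
          have hin' : i = n := by omega
          have h1 : (if i = n ∨ i = j then ({f} : Set G.E) else ∅) = {f} := by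
            rw [if_pos (Or.inl hin')]
          have h2 : {i' | j ≤ i' ∧ i' < n ∧ (i = i' ∨ i = i' + 1)} = {m} := by
            ext i'; simp only [Set.mem_setOf_eq, Set.mem_singleton_iff]; omega
          rw [h1, h2, Set.image_singleton, Set.ncard_union_eq, Set.ncard_singleton,
            Set.ncard_singleton]
          simp only [Set.disjoint_singleton]
          exact hfnew m (by omega)
      · left
        unfold degOn
        rw [Set.ncard_eq_zero (Set.toFinite _)]
        ext g
        simp only [Set.mem_setOf_eq, Set.mem_empty_iff_false, iff_false]
        rintro ⟨hg, hu⟩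
        exact hex (humem g hg hu)
  · -- extend the path
    push_neg at hrep
    refine ⟨Function.update v (n + 1) w, Function.update ed n f, ?_, ?_⟩
    · intro i hi i' hi' heq
      simp only [Set.mem_Iic] at hi hi'
      by_cases h1 : i = n + 1 <;> by_cases h2 : i' = n + 1
      · omega
      · subst h1
        rw [Function.update_self, Function.update_of_ne h2] at heq
        exact absurd heq (hrep i' (by omega))
      · subst h2
        rw [Function.update_self, Function.update_of_ne h1] at heq
        exact absurd heq.symm (hrep i (by omega))
      · rw [Function.update_of_ne h1, Function.update_of_ne h2] at heq
        exact hvinj (by simp [Set.mem_Iic]; omega) (by simp [Set.mem_Iic]; omega) heq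
    · intro i hi
      by_cases h1 : i = n
      · subst h1
        rw [Function.update_self, Function.update_of_ne (by omega),
          Function.update_self]
        exact ⟨hfS.1, hw⟩
      · have hi' : i < n := by omega
        rw [Function.update_of_ne h1, Function.update_of_ne (by omega),
          Function.update_of_ne (by omega)]
        exact hed i hi'

lemma exists_deg02_subset {F : Set G.E} (hF : ∀ v, Even (G.degOn F v))
    (hne : F.Nonempty) :
    ∃ C ⊆ F, C.Nonempty ∧ ∀ v, G.degOn C v = 0 ∨ G.degOn C v = 2 := by
  haveI := G.finV
  by_contra hno
  -- base path of length 1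
  obtain ⟨e, he⟩ := hne
  obtain ⟨a, hae⟩ : ∃ a, a ∈ G.ends e := by
    induction (G.ends e) using Sym2.inductionOn with
    | hf u v => exact ⟨u, Sym2.mem_mk_left u v⟩
  obtain ⟨b, hb⟩ := Sym2.mem_iff_exists.mp hae
  have hab : a ≠ b := fun h => G.noLoop e (by rw [hb, h]; exact Sym2.mk_isDiag_iff.mpr rfl)
  have hbase : G.HasPath F 1 := by
    refine ⟨fun i => if i = 0 then a else b, fun _ => e, ?_, ?_⟩
    · intro i hi i' hi' heq
      simp only [Set.mem_Iic] at hi hi'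
      interval_cases i <;> interval_cases i' <;> simp_all
    · intro i hi
      interval_cases i
      simpa using ⟨he, hb⟩
  have hall : ∀ k, G.HasPath F (k + 1) := by
    intro k
    induction k with
    | zero => exact hbase
    | succ k ih => exact extend_path hF hno (by omega) ih
  obtain ⟨v, ed, hvinj, _⟩ := hall (Nat.card G.V)
  have hinj : Function.Injective (fun i : Fin (Nat.card G.V + 2) => v i) := by
    intro i i' heq
    have := hvinj (by simp [Set.mem_Iic]; omega) (by simp [Set.mem_Iic]; omega) heq
    exact Fin.ext this
  have := Nat.card_le_card_of_injective _ hinj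
  simp only [Nat.card_eq_fintype_card, Fintype.card_fin] at this
  omega


lemma degOn_union {A B : Set G.E} (h : Disjoint A B) (v : G.V) :
    G.degOn (A ∪ B) v = G.degOn A v + G.degOn B v := by
  haveI := G.finE
  unfold degOn
  rw [show {e | e ∈ A ∪ B ∧ v ∈ G.ends e} =
      {e | e ∈ A ∧ v ∈ G.ends e} ∪ {e | e ∈ B ∧ v ∈ G.ends e} by
    ext e; simp only [Set.mem_union, Set.mem_setOf_eq]; tauto]
  refine Set.ncard_union_eq ?_ (Set.toFinite _) (Set.toFinite _)
  exact Set.disjoint_left.mpr fun e he he' => Set.disjoint_left.mp h he.1 he'.1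

lemma exists_decomp_of_even_aux : ∀ (N : ℕ) (F : Set G.E), F.ncard ≤ N →
    (∀ v, Even (G.degOn F v)) → ∃ D, G.IsCycleDecompOn F D := by
  haveI := G.finE
  intro N
  induction N with
  | zero =>
    intro F hcard _
    have hF : F = ∅ := by
      rw [← Set.ncard_eq_zero (Set.toFinite _)]
      omega
    exact ⟨∅, fun C hC => absurd hC (Set.notMem_empty C),
      fun e he => absurd he (by rw [hF] at *; exact Set.notMem_empty e)⟩
  | succ N ih =>
    intro F hcard hF
    by_cases hne : F.Nonempty
    · obtain ⟨C0, hC0F, hC0ne, hC0deg⟩ := exists_deg02_subset hF hne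
      obtain ⟨C, hCC0, hC⟩ := exists_cycle_of_deg02 hC0ne hC0deg
      have hCF : C ⊆ F := hCC0.trans hC0F
      have hCne : C.Nonempty := hC.1
      have hsplit : F = (F \ C) ∪ C := by
        rw [Set.diff_union_self, Set.union_eq_self_of_subset_right hCF]
      have hdisj : Disjoint (F \ C) C := Set.disjoint_sdiff_left
      have heven : ∀ v, Even (G.degOn (F \ C) v) := by
        intro v
        have h1 : G.degOn F v = G.degOn (F \ C) v + G.degOn C v := by
          conv_lhs => rw [hsplit]
          exact degOn_union hdisj v
        obtain ⟨k, hk⟩ := hF v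
        rcases hC.2.1 v with h2 | h2 <;> rw [h2] at h1 <;>
          exact Nat.even_iff.mpr (by omega)
      have hlt : (F \ C).ncard < F.ncard := by
        refine Set.ncard_lt_ncard ?_ (Set.toFinite _)
        obtain ⟨e, he⟩ := hCne
        exact ⟨Set.diff_subset, fun hsub => (hsub (hCF he)).2 he⟩
      obtain ⟨D', hD'⟩ := ih (F \ C) (by omega) heven
      refine ⟨insert C D', ?_, ?_⟩
      · rintro C' (rfl | hC')
        · exact ⟨hC, hCF⟩
        · exact ⟨(hD'.1 C' hC').1, ((hD'.1 C' hC').2).trans Set.diff_subset⟩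
      · intro e he
        by_cases heC : e ∈ C
        · refine ⟨C, ⟨Set.mem_insert _ _, heC⟩, ?_⟩
          rintro C' ⟨(rfl | hC'), heC'⟩
          · rfl
          · exact absurd heC' fun h => ((hD'.1 C' hC').2 h).2 heC
        · obtain ⟨C', hC', huniq⟩ := hD'.2 e ⟨he, heC⟩
          refine ⟨C', ⟨Set.mem_insert_of_mem _ hC'.1, hC'.2⟩, ?_⟩
          rintro C'' ⟨(rfl | hC''), heC''⟩
          · exact absurd heC'' heC
          · exact huniq C'' ⟨hC'', heC''⟩
    · rw [Set.not_nonempty_iff_eq_empty] at hne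
      subst hne
      exact ⟨∅, fun C hC => absurd hC (Set.notMem_empty C),
        fun e he => absurd he (Set.notMem_empty e)⟩

lemma exists_decomp_of_even {F : Set G.E} (hF : ∀ v, Even (G.degOn F v)) :
    ∃ D, G.IsCycleDecompOn F D :=
  exists_decomp_of_even_aux F.ncard F le_rfl hF

lemma decomp_finite {F : Set G.E} {D : Set (Set G.E)} (hD : G.IsCycleDecompOn F D) :
    D.Finite ∧ D.ncard ≤ Nat.card G.E := by
  haveI := G.finE
  by_cases hDne : D.Nonempty
  · obtain ⟨C0, hC0⟩ := hDne
    obtain ⟨e0, _⟩ := (hD.1 C0 hC0).1.1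
    haveI : Nonempty G.E := ⟨e0⟩
    set f : Set G.E → G.E := fun C => if h : C.Nonempty then h.choose else Classical.arbitrary G.E
      with hf
    have hinj : Set.InjOn f D := by
      intro C1 h1 C2 h2 heq
      have hne1 := (hD.1 C1 h1).1.1
      have hne2 := (hD.1 C2 h2).1.1
      rw [hf] at heq
      simp only [dif_pos hne1, dif_pos hne2] at heq
      have hm1 : f C1 ∈ C1 := by rw [hf]; simp only [dif_pos hne1]; exact hne1.choose_spec
      have hm2 : f C2 ∈ C2 := by rw [hf]; simp only [dif_pos hne2]; exact hne2.choose_spec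
      have hm1' : f C1 ∈ C2 := by
        rw [hf]; simp only [dif_pos hne1, heq]; exact hne2.choose_spec
      have hFmem : f C1 ∈ F := (hD.1 C1 h1).2 hm1
      obtain ⟨C', _, huniq⟩ := hD.2 (f C1) hFmem
      rw [huniq C1 ⟨h1, hm1⟩, huniq C2 ⟨h2, hm1'⟩]
    have hfin : D.Finite := Set.Finite.of_finite_image (Set.toFinite _) hinj
    refine ⟨hfin, ?_⟩
    calc D.ncard = (f '' D).ncard := (Set.ncard_image_of_injOn hinj).symm
    _ ≤ (Set.univ : Set G.E).ncard := Set.ncard_le_ncard (Set.subset_univ _) (Set.toFinite _)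
    _ = Nat.card G.E := Set.ncard_univ _
  · rw [Set.not_nonempty_iff_eq_empty] at hDne
    subst hDne
    simp


lemma eulerian_even (hE : G.IsEulerian) (v : G.V) : Even (G.degOn Set.univ v) := by
  haveI := G.finE
  obtain ⟨vs, es, hlen, hends, hclosed, hnodup, hall⟩ := hE
  set n := es.length with hn
  -- vertex sequence
  set w : Fin (n + 1) → G.V := fun j => vs[(j : ℕ)]'(by rw [hlen]; exact j.isLt) with hw
  -- edge sequence
  set κ : Fin n → G.E := fun i => es[(i : ℕ)] with hκ
  have hκends : ∀ i : Fin n, G.ends (κ i) = s(w i.castSucc, w i.succ) := by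
    intro i
    refine hends i (κ i) (w i.castSucc) (w i.succ) ?_ ?_ ?_
    · exact List.getElem?_eq_getElem i.isLt
    · exact List.getElem?_eq_getElem (by rw [hlen]; omega)
    · exact List.getElem?_eq_getElem (by rw [hlen]; omega)
  have hκinj : Function.Injective κ := by
    intro i i' heq
    exact Fin.ext ((hnodup.getElem_inj_iff).mp heq)
  have hκsurj : Function.Surjective κ := by
    intro e
    obtain ⟨i, hi, hie⟩ := List.getElem_of_mem (hall e)
    exact ⟨⟨i, hi⟩, hie⟩
  -- closedness
  have hwlast : w 0 = w (Fin.last n) := by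
    rw [List.head?_eq_getElem?, List.getLast?_eq_getElem?] at hclosed
    have h0 : vs[(0:ℕ)]? = some (vs[(0:ℕ)]'(by omega)) := List.getElem?_eq_getElem (by omega)
    have h1 : vs[vs.length - 1]? = some (vs[vs.length - 1]'(by omega)) :=
      List.getElem?_eq_getElem (by omega)
    rw [h0, h1] at hclosed
    have h2 : vs[(0:ℕ)]'(by omega) = vs[vs.length - 1]'(by omega) := Option.some_injective _ hclosed
    have key : ∀ (i i' : ℕ) (hi : i < vs.length) (hi' : i' < vs.length), i = i' →
        vs[i]'hi = vs[i']'hi' := by rintro i i' hi hi' rfl; rfl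
    simp only [hw]
    refine (key _ _ (by simp [hlen]) (by omega) (by simp)).trans
      (h2.trans (key _ _ (by omega) (by simp [hlen, Fin.val_last])
        (by simp only [Fin.val_last]; omega)))
  -- the incidence set pulled back to Fin n
  have hset : {e | e ∈ Set.univ ∧ v ∈ G.ends e} = κ '' {i | v ∈ G.ends (κ i)} := by
    ext e
    simp only [Set.mem_setOf_eq, Set.mem_image, Set.mem_univ, true_and]
    constructor
    · intro he
      obtain ⟨i, rfl⟩ := hκsurj e
      exact ⟨i, he, rfl⟩
    · rintro ⟨i, hi, rfl⟩; exact hi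
  unfold degOn
  rw [hset, Set.ncard_image_of_injective _ hκinj]
  -- split by endpoint
  have hsplit : {i : Fin n | v ∈ G.ends (κ i)} =
      {i | w i.castSucc = v} ∪ {i | w i.succ = v} := by
    ext i
    simp only [Set.mem_setOf_eq, Set.mem_union, hκends i, Sym2.mem_iff]
    constructor
    · rintro (h | h)
      · exact Or.inl h.symm
      · exact Or.inr h.symm
    · rintro (h | h)
      · exact Or.inl h.symm
      · exact Or.inr h.symm
  have hdisj : Disjoint {i : Fin n | w i.castSucc = v} {i : Fin n | w i.succ = v} := by
    rw [Set.disjoint_left]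
    intro i h1 h2
    exact G.noLoop (κ i) (by
      rw [hκends i, Sym2.mk_isDiag_iff]
      rw [Set.mem_setOf_eq] at h1 h2
      rw [h1, h2])
  rw [hsplit, Set.ncard_union_eq hdisj (Set.toFinite _) (Set.toFinite _)]
  -- both sets have the same cardinality
  have hA : Fin.castSucc '' {i : Fin n | w i.castSucc = v} =
      {j : Fin (n+1) | w j = v} \ {Fin.last n} := by
    ext j
    simp only [Set.mem_image, Set.mem_setOf_eq, Set.mem_diff, Set.mem_singleton_iff]
    constructor
    · rintro ⟨i, hi, rfl⟩
      exact ⟨hi, Fin.exists_castSucc_eq.mp ⟨i, rfl⟩⟩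
    · rintro ⟨hj, hlast⟩
      obtain ⟨i, rfl⟩ := Fin.exists_castSucc_eq.mpr hlast
      exact ⟨i, hj, rfl⟩
  have hB : Fin.succ '' {i : Fin n | w i.succ = v} =
      {j : Fin (n+1) | w j = v} \ {0} := by
    ext j
    simp only [Set.mem_image, Set.mem_setOf_eq, Set.mem_diff, Set.mem_singleton_iff]
    constructor
    · rintro ⟨i, hi, rfl⟩
      exact ⟨hi, Fin.exists_succ_eq.mp ⟨i, rfl⟩⟩
    · rintro ⟨hj, h0⟩
      obtain ⟨i, rfl⟩ := Fin.exists_succ_eq.mpr h0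
      exact ⟨i, hj, rfl⟩
  have hcard : {i : Fin n | w i.castSucc = v}.ncard = {i : Fin n | w i.succ = v}.ncard := by
    have e1 : {i : Fin n | w i.castSucc = v}.ncard =
        ({j : Fin (n+1) | w j = v} \ {Fin.last n}).ncard := by
      rw [← hA, Set.ncard_image_of_injective _ (Fin.castSucc_injective n)]
    have e2 : {i : Fin n | w i.succ = v}.ncard =
        ({j : Fin (n+1) | w j = v} \ {0}).ncard := by
      rw [← hB, Set.ncard_image_of_injective _ (Fin.succ_injective n)]
    rw [e1, e2]
    by_cases hv : w (Fin.last n) = v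
    · have hv0 : w 0 = v := by rw [hwlast]; exact hv
      rw [Set.ncard_diff_singleton_of_mem (show Fin.last n ∈ {j | w j = v} from hv),
        Set.ncard_diff_singleton_of_mem (show (0 : Fin (n+1)) ∈ {j | w j = v} from hv0)]
    · have hv0 : ¬ w 0 = v := by rw [hwlast]; exact hv
      congr 1
      ext j
      simp only [Set.mem_diff, Set.mem_setOf_eq, Set.mem_singleton_iff]
      constructor
      · rintro ⟨hj, _⟩
        exact ⟨hj, fun h => hv0 (h ▸ hj)⟩
      · rintro ⟨hj, _⟩
        exact ⟨hj, fun h => hv (h ▸ hj)⟩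
  rw [hcard]
  exact ⟨_, rfl⟩


end MGraph

/-- if an even (Eulerian) subgraph has non-unique cycle number,
so does the whole Eulerian graph. -/
theorem subgraph_cycle_gap_lifts (G : MGraph) (hE : G.IsEulerian)
    (F : Set G.E) (hF : ∀ v, Even (G.degOn F v))
    (h : G.cOn F < G.nuOn F) : G.c < G.nu := by
  classical
  haveI := G.finE
  -- the complement of F has even degrees
  have hFc : ∀ v, Even (G.degOn Fᶜ v) := by
    intro v
    have hsplit : G.degOn Set.univ v = G.degOn F v + G.degOn Fᶜ v := by
      conv_lhs => rw [show (Set.univ : Set G.E) = F ∪ Fᶜ from (Set.union_compl_self F).symm]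
      exact MGraph.degOn_union disjoint_compl_right v
    obtain ⟨k, hk⟩ := MGraph.eulerian_even hE v
    obtain ⟨k2, hk2⟩ := hF v
    exact Nat.even_iff.mpr (by omega)
  obtain ⟨D0, hD0⟩ := MGraph.exists_decomp_of_even hFc
  -- the set of achievable cycle numbers for F is nonempty and bounded
  have hSFne : {n | ∃ D, G.IsCycleDecompOn F D ∧ D.ncard = n}.Nonempty := by
    by_contra hc
    rw [Set.not_nonempty_iff_eq_empty] at hc
    unfold MGraph.cOn MGraph.nuOn at h
    rw [hc] at h
    simp at h
  have hSFbdd : BddAbove {n | ∃ D, G.IsCycleDecompOn F D ∧ D.ncard = n} :=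
    ⟨Nat.card G.E, by rintro n ⟨D, hD, rfl⟩; exact (MGraph.decomp_finite hD).2⟩
  have hmax : G.nuOn F ∈ {n | ∃ D, G.IsCycleDecompOn F D ∧ D.ncard = n} :=
    Nat.sSup_mem hSFne hSFbdd
  have hmin : G.cOn F ∈ {n | ∃ D, G.IsCycleDecompOn F D ∧ D.ncard = n} :=
    Nat.sInf_mem hSFne
  obtain ⟨D2, hD2, hD2card⟩ := hmax
  obtain ⟨D1, hD1, hD1card⟩ := hmin
  -- gluing a decomposition of F with the fixed decomposition of Fᶜ
  have key : ∀ D, G.IsCycleDecompOn F D → G.IsCycleDecompOn Set.univ (D ∪ D0) ∧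
      (D ∪ D0).ncard = D.ncard + D0.ncard := by
    intro D hD
    have hdisj : Disjoint D D0 := by
      rw [Set.disjoint_left]
      intro C hC hC0
      obtain ⟨e, he⟩ := (hD.1 C hC).1.1
      exact ((hD0.1 C hC0).2 he) ((hD.1 C hC).2 he)
    refine ⟨⟨?_, ?_⟩, Set.ncard_union_eq hdisj (MGraph.decomp_finite hD).1
      (MGraph.decomp_finite hD0).1⟩
    · rintro C (hC | hC)
      · exact ⟨(hD.1 C hC).1, Set.subset_univ _⟩
      · exact ⟨(hD0.1 C hC).1, Set.subset_univ _⟩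
    · intro e _
      by_cases heF : e ∈ F
      · obtain ⟨C, hC, huniq⟩ := hD.2 e heF
        refine ⟨C, ⟨Or.inl hC.1, hC.2⟩, ?_⟩
        rintro C' ⟨(hC' | hC'), heC'⟩
        · exact huniq C' ⟨hC', heC'⟩
        · exact absurd heF ((hD0.1 C' hC').2 heC')
      · obtain ⟨C, hC, huniq⟩ := hD0.2 e heF
        refine ⟨C, ⟨Or.inr hC.1, hC.2⟩, ?_⟩
        rintro C' ⟨(hC' | hC'), heC'⟩
        · exact absurd ((hD.1 C' hC').2 heC') heF
        · exact huniq C' ⟨hC', heC'⟩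
  obtain ⟨hU1, hc1⟩ := key D1 hD1
  obtain ⟨hU2, hc2⟩ := key D2 hD2
  have hSUbdd : BddAbove {n | ∃ D, G.IsCycleDecompOn Set.univ D ∧ D.ncard = n} :=
    ⟨Nat.card G.E, by rintro n ⟨D, hD, rfl⟩; exact (MGraph.decomp_finite hD).2⟩
  have hcle : G.c ≤ D1.ncard + D0.ncard := by
    unfold MGraph.c MGraph.cOn
    exact Nat.sInf_le ⟨D1 ∪ D0, hU1, hc1⟩
  have hnuge : D2.ncard + D0.ncard ≤ G.nu := by
    unfold MGraph.nu MGraph.nuOn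
    exact le_csSup hSUbdd ⟨D2 ∪ D0, hU2, hc2⟩
  omega
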